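/- Let G be a finite p-group, d ≥ 0, and suppose G^{(d+1)} ≤ γ_{2^{d+1}+1}(G). Then for all e ≥ 1, G^{(d+e)} ≤ γ_{2^{d+e} + 2^{e-1}}(G). -/

import Mathlib

open Subgroup

/-- Three subgroups lemma, `≤ N` version. -/
theorem three_subgroups {G : Type*} [Group G] {H₁ H₂ H₃ N : Subgroup G} [N.Normal]
    (h1 : ⁅⁅H₂, H₃⁆, H₁⁆ ≤ N) (h2 : ⁅⁅H₃, H₁⁆, H₂⁆ ≤ N) : ⁅⁅H₁, H₂⁆, H₃⁆ ≤ N := by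
  let f := QuotientGroup.mk' N
  have key : ∀ K : Subgroup G, K ≤ N ↔ map f K = ⊥ := fun K => by
    rw [Subgroup.map_eq_bot_iff, QuotientGroup.ker_mk']
  rw [key] at h1 h2 ⊢
  rw [map_commutator, map_commutator] at h1 h2 ⊢
  exact commutator_commutator_eq_bot_of_rotate h1 h2

theorem lcs_succ' {G : Type*} [Group G] (n : ℕ) :
    (⊤ : Subgroup G).lowerCentralSeries (n + 1) = ⁅(⊤ : Subgroup G).lowerCentralSeries n, (⊤ : Subgroup G)⁆ := rfl

theorem lcs_comm {G : Type*} [Group G] (n m : ℕ) :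
    ⁅(⊤ : Subgroup G).lowerCentralSeries m, (⊤ : Subgroup G).lowerCentralSeries n⁆ ≤ (⊤ : Subgroup G).lowerCentralSeries (m + n + 1) := by
  induction n generalizing m with
  | zero => rw [Subgroup.lowerCentralSeries_zero, ← lcs_succ']
  | succ n ih =>
    rw [lcs_succ']
    have h1 : ⁅⁅(⊤ : Subgroup G), (⊤ : Subgroup G).lowerCentralSeries m⁆, (⊤ : Subgroup G).lowerCentralSeries n⁆ ≤
        (⊤ : Subgroup G).lowerCentralSeries (m + (n + 1) + 1) := by
      calc ⁅⁅(⊤ : Subgroup G), (⊤ : Subgroup G).lowerCentralSeries m⁆, (⊤ : Subgroup G).lowerCentralSeries n⁆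
          = ⁅(⊤ : Subgroup G).lowerCentralSeries (m + 1), (⊤ : Subgroup G).lowerCentralSeries n⁆ := by
            rw [Subgroup.commutator_comm (⊤ : Subgroup G) ((⊤ : Subgroup G).lowerCentralSeries m), ← lcs_succ']
        _ ≤ (⊤ : Subgroup G).lowerCentralSeries (m + 1 + n + 1) := ih (m + 1)
        _ = (⊤ : Subgroup G).lowerCentralSeries (m + (n + 1) + 1) := by congr 1; omega
    have h2 : ⁅⁅(⊤ : Subgroup G).lowerCentralSeries m, (⊤ : Subgroup G).lowerCentralSeries n⁆, (⊤ : Subgroup G)⁆ ≤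
        (⊤ : Subgroup G).lowerCentralSeries (m + (n + 1) + 1) := by
      calc ⁅⁅(⊤ : Subgroup G).lowerCentralSeries m, (⊤ : Subgroup G).lowerCentralSeries n⁆, (⊤ : Subgroup G)⁆
          ≤ ⁅(⊤ : Subgroup G).lowerCentralSeries (m + n + 1), (⊤ : Subgroup G)⁆ :=
            Subgroup.commutator_mono (ih m) le_rfl
        _ = (⊤ : Subgroup G).lowerCentralSeries (m + n + 1 + 1) := (lcs_succ' _).symm
        _ = (⊤ : Subgroup G).lowerCentralSeries (m + (n + 1) + 1) := by congr 1
    calc ⁅(⊤ : Subgroup G).lowerCentralSeries m, ⁅(⊤ : Subgroup G).lowerCentralSeries n, (⊤ : Subgroup G)⁆⁆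
        = ⁅⁅(⊤ : Subgroup G).lowerCentralSeries n, (⊤ : Subgroup G)⁆, (⊤ : Subgroup G).lowerCentralSeries m⁆ :=
          Subgroup.commutator_comm _ _
      _ ≤ (⊤ : Subgroup G).lowerCentralSeries (m + (n + 1) + 1) := three_subgroups h1 h2

/-- If `G^(d+1) ≤ γ_{2^(d+1)+1}(G)` in a finite `p`-group `G`, then for all `e ≥ 1`,
`G^(d+e) ≤ γ_{2^(d+e)+2^(e-1)}(G)`, where `γ_i(G) = (⊤ : Subgroup G).lowerCentralSeries (i-1)`. -/
theorem derivedSeries_le_lowerCentralSeries_of_le {p : ℕ} (hp : p.Prime) {G : Type*}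
    [Group G] [Finite G] (hG : IsPGroup p G) (d : ℕ)
    (h : derivedSeries G (d + 1) ≤ (⊤ : Subgroup G).lowerCentralSeries (2 ^ (d + 1))) :
    ∀ e : ℕ, 1 ≤ e →
      derivedSeries G (d + e) ≤ (⊤ : Subgroup G).lowerCentralSeries (2 ^ (d + e) + 2 ^ (e - 1) - 1) := by
  intro e he
  induction e with
  | zero => omega
  | succ e ih =>
    rcases Nat.eq_zero_or_pos e with rfl | he'
    · simpa using h
    · have ihe := ih he'
      have key : derivedSeries G (d + (e + 1)) ≤
          (⊤ : Subgroup G).lowerCentralSeries (2 ^ (d + e) + 2 ^ (e - 1) - 1 + (2 ^ (d + e) + 2 ^ (e - 1) - 1) + 1) := by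
        calc derivedSeries G (d + (e + 1)) = ⁅derivedSeries G (d + e), derivedSeries G (d + e)⁆ :=
              derivedSeries_succ G (d + e)
          _ ≤ ⁅(⊤ : Subgroup G).lowerCentralSeries (2 ^ (d + e) + 2 ^ (e - 1) - 1),
              (⊤ : Subgroup G).lowerCentralSeries (2 ^ (d + e) + 2 ^ (e - 1) - 1)⁆ :=
              Subgroup.commutator_mono ihe ihe
          _ ≤ _ := lcs_comm _ _
      have harith : 2 ^ (d + e) + 2 ^ (e - 1) - 1 + (2 ^ (d + e) + 2 ^ (e - 1) - 1) + 1 =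
          2 ^ (d + (e + 1)) + 2 ^ (e + 1 - 1) - 1 := by
        have h1 : 2 ^ (d + (e + 1)) = 2 * 2 ^ (d + e) := by
          rw [show d + (e + 1) = (d + e) + 1 by omega, pow_succ]; ring
        have h2 : 2 ^ (e + 1 - 1) = 2 * 2 ^ (e - 1) := by
          rw [show e + 1 - 1 = (e - 1) + 1 by omega, pow_succ]; ring
        have h3 : 1 ≤ 2 ^ (d + e) := Nat.one_le_two_pow
        have h4 : 1 ≤ 2 ^ (e - 1) := Nat.one_le_two_pow
        omega
      rw [harith] at key
      exact key
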